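/- Let ω > 0, T* > 0 and L* ∈ ℝ. The vector x₀* = ( −L*/2 , (ωL*/2)·(e^{ωT*}+1)/(e^{ωT*}−1) ) is the unique vector in ℝ² satisfying x₀* = A(ω,T*)·x₀* + b·L*, i.e. it is the unique fixed point of the discrete step-to-step walking map with constant step length L* and step time T*. -/

import Mathlib

/-- the vector `x₀* = (−L*/2, (ωL*/2)(e^{ωT*}+1)/(e^{ωT*}−1))` is the
unique fixed point of the discrete step-to-step walking map
`(x,v) ↦ A(ω,T*)·(x,v) + b·L*` with `b = (−1,0)ᵀ`. -/
theorem stmt1 (ω T L : ℝ) (hω : 0 < ω) (hT : 0 < T)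
    (A11 A12 A21 A22 : ℝ)
    (hA11 : A11 = Real.cosh (ω * T)) (hA12 : A12 = Real.sinh (ω * T) / ω)
    (hA21 : A21 = ω * Real.sinh (ω * T)) (hA22 : A22 = Real.cosh (ω * T))
    (f : ℝ × ℝ → ℝ × ℝ)
    (hf : f = fun p => (A11 * p.1 + A12 * p.2 - L, A21 * p.1 + A22 * p.2))
    (xstar : ℝ × ℝ)
    (hxstar : xstar = (-L / 2,
      (ω * L / 2) * ((Real.exp (ω * T) + 1) / (Real.exp (ω * T) - 1)))) :
    f xstar = xstar ∧ ∀ y : ℝ × ℝ, f y = y → y = xstar := by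
  subst hA11 hA12 hA21 hA22 hf hxstar
  have hE : 1 < Real.exp (ω * T) := by
    rw [show (1:ℝ) = Real.exp 0 by simp]
    exact Real.exp_lt_exp.mpr (by positivity)
  have hEpos : (0:ℝ) < Real.exp (ω * T) := lt_trans one_pos hE
  set E := Real.exp (ω * T) with hEdef
  have hEne : E - 1 ≠ 0 := sub_ne_zero.mpr (ne_of_gt hE)
  have hEne' : E ≠ 0 := ne_of_gt hEpos
  have hωne : ω ≠ 0 := ne_of_gt hω
  have hcosh : Real.cosh (ω * T) = (E + E⁻¹) / 2 := by
    rw [Real.cosh_eq, Real.exp_neg]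
  have hsinh : Real.sinh (ω * T) = (E - E⁻¹) / 2 := by
    rw [Real.sinh_eq, Real.exp_neg]
  constructor
  · simp only [hcosh, hsinh, Prod.mk.injEq]
    constructor
    · field_simp
      ring
    · field_simp
      ring
  · rintro ⟨y1, y2⟩ hy
    simp only [hcosh, hsinh, Prod.mk.injEq] at hy
    obtain ⟨h1, h2⟩ := hy
    field_simp at h1 h2
    have key1 : (-8 * E ^ 2 * ω * (E - 1) ^ 2) * (y1 + L / 2) = 0 := by
      linear_combination 2 * E * (E - 1) ^ 2 * h1 - 2 * E * (E - 1) * (E + 1) * h2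
    have hne : (-8 * E ^ 2 * ω * (E - 1) ^ 2) ≠ 0 := by
      apply mul_ne_zero (mul_ne_zero (mul_ne_zero (by norm_num) (pow_ne_zero _ hEne')) hωne)
        (pow_ne_zero _ hEne)
    have hy1 : y1 = -L / 2 := by
      have := (mul_eq_zero.mp key1).resolve_left hne
      linarith
    have key2 : 2 * (E - 1) ^ 2 * y2 - ω * L * (E ^ 2 - 1) = 0 := by
      linear_combination 2 * h2 - 2 * ω * (E ^ 2 - 1) * hy1
    have hy2 : y2 = (ω * L / 2) * ((E + 1) / (E - 1)) := by
      have h4 : y2 = ω * L * (E ^ 2 - 1) / (2 * (E - 1) ^ 2) := by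
        field_simp
        linear_combination key2
      rw [h4]
      field_simp
      ring
    exact Prod.ext hy1 hy2
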